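/- arXiv:1403.5447 — 2 statements merged into one kernel-verified Lean document; each statement's English description precedes it below -/
import Mathlib

section
/- Let u⁻ < u⁺ be real numbers and let b₂ < b₃ < ⋯ < b_{n−1} be real numbers with u⁻ < b₂ and b_{n−1} < u⁺. Then for every x ∈ ℝ the scalar saturation function satisfies sat(x; u⁻, u⁺) = sat(x; u⁻, b₂) + Σ_{i=3}^{n−1} sat(x − b_{i−1}; 0, bᵢ − b_{i−1}) + sat(x − b_{n−1}; 0, u⁺ − b_{n−1}). -/
/-- The scalar saturation function: sat(x; a, b) = a if x ≤ a, x if a < x < b,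
and b if x ≥ b. -/
noncomputable def sat (x a b : ℝ) : ℝ := if x ≤ a then a else if x < b then x else b

lemma sat_split (x a c m : ℝ) (h1 : a < m) (h2 : m < c) :
    sat x a c = sat x a m + sat (x - m) 0 (c - m) := by
  unfold sat
  split_ifs <;> linarith

lemma chain (um : ℝ) (b : ℕ → ℝ) (M : ℕ) (hmono : ∀ i < M, b i < b (i + 1))
    (h0 : um < b 0) : um < b M := by
  induction M with
  | zero => exact h0
  | succ k ihk =>
    exact lt_trans (ihk (fun i hi => hmono i (by omega))) (hmono k (by omega))

/-- splitting identity for the scalar saturation function.  Here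
`b 0, b 1, …, b N` play the role of the intermediate points `b₂ < ⋯ < b_{n−1}`
(so `N + 1` intermediate points, i.e. `n = N + 3`):
sat(x; u⁻, u⁺) = sat(x; u⁻, b₂) + Σ_{i=3}^{n−1} sat(x − b_{i−1}; 0, bᵢ − b_{i−1})
                 + sat(x − b_{n−1}; 0, u⁺ − b_{n−1}). -/
theorem stmt_12 (um up : ℝ) (hu : um < up) (N : ℕ) (b : ℕ → ℝ)
    (hmono : ∀ i < N, b i < b (i + 1)) (h0 : um < b 0) (hN : b N < up) :
    ∀ x : ℝ,
      sat x um up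
        = sat x um (b 0)
          + (∑ i ∈ Finset.range N, sat (x - b i) 0 (b (i + 1) - b i))
          + sat (x - b N) 0 (up - b N) := by
  induction N generalizing up with
  | zero =>
    intro x
    simp only [Finset.range_zero, Finset.sum_empty, add_zero]
    exact sat_split x um up (b 0) h0 hN
  | succ n ih =>
    intro x
    have hbn : b n < b (n + 1) := hmono n (Nat.lt_succ_self n)
    have hum : um < b (n + 1) := chain um b (n + 1) hmono h0
    rw [sat_split x um up (b (n + 1)) hum hN,
      ih (b (n + 1)) hum (fun i hi => hmono i (by omega)) hbn x,
      Finset.sum_range_succ]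
    ring
end

section
/- Consider the constrained closed-loop system with disturbance ẋ = B·sat(−Bᵀ∇H(x) − x_c; u⁻, u⁺) + E·d̄, ẋ_c = Bᵀ∇H(x), and suppose d̄ satisfies the matching condition: there exists x̄_c ∈ ℝᵐ with B x̄_c = E d̄. Then, under the change of variable x̃_c = x_c − x̄_c, the system is equivalent to the disturbance-free constrained system with shifted constraint intervals: ẋ = B·sat(−Bᵀ∇H(x) − x̃_c; u⁻ + x̄_c, u⁺ + x̄_c), ẋ̃_c = Bᵀ∇H(x); that is, (x(t), x_c(t)) solves the first system if and only if (x(t), x_c(t) − x̄_c) solves the second. -/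
open Matrix

/-- The multidimensional saturation function, defined componentwise. -/
noncomputable def satVec {m : ℕ} (x a b : Fin m → ℝ) : Fin m → ℝ :=
  fun i => sat (x i) (a i) (b i)

lemma sat_shift (x a b c : ℝ) : sat (x + c) (a + c) (b + c) = sat x a b + c := by
  unfold sat
  simp only [add_le_add_iff_right, add_lt_add_iff_right]
  split_ifs <;> ring

lemma satVec_shift {m : ℕ} (x a b c : Fin m → ℝ) :
    satVec (x + c) (a + c) (b + c) = satVec x a b + c := by
  funext i
  simpa [satVec] using sat_shift (x i) (a i) (b i) (c i)

/-- If d̄ satisfies the matching condition B x̄_c = E d̄, then under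
the change of variable x̃_c = x_c − x̄_c the constrained closed-loop system with
disturbance ẋ = B sat(−Bᵀ∇H(x) − x_c; u⁻, u⁺) + E d̄, ẋ_c = Bᵀ∇H(x) is equivalent
to the disturbance-free system with shifted constraint intervals
ẋ = B sat(−Bᵀ∇H(x) − x̃_c; u⁻ + x̄_c, u⁺ + x̄_c), ẋ̃_c = Bᵀ∇H(x): (x, x_c) solves
the first system iff (x, x_c − x̄_c) solves the second. -/
theorem stmt_17 (n m k : ℕ) (tl hd : Fin m → Fin n) (hloop : ∀ e, tl e ≠ hd e)
    (B : Matrix (Fin n) (Fin m) ℝ)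
    (hB : ∀ i j, B i j = if hd j = i then 1 else if tl j = i then -1 else 0)
    (E : Matrix (Fin n) (Fin k) ℝ)
    (hE : ∀ j : Fin k, ∃ i : Fin n,
      (E i j = 1 ∨ E i j = -1) ∧ ∀ i', i' ≠ i → E i' j = 0)
    (H : (Fin n → ℝ) → ℝ) (gradH : (Fin n → ℝ) → (Fin n → ℝ))
    (hH : ContDiff ℝ 1 H)
    (hgradH : ∀ x v, fderiv ℝ H x v = ∑ i, gradH x i * v i)
    (um up : Fin m → ℝ) (hu : ∀ i, um i < up i)
    (d : Fin k → ℝ) (xbarc : Fin m → ℝ)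
    -- the matching condition
    (hmatch : B.mulVec xbarc = E.mulVec d)
    (x : ℝ → (Fin n → ℝ)) (xc : ℝ → (Fin m → ℝ)) :
    -- (x, x_c) solves the constrained system with disturbance …
    (∀ t : ℝ, 0 ≤ t →
      HasDerivAt x
        (B.mulVec (satVec (-(Bᵀ.mulVec (gradH (x t))) - xc t) um up)
          + E.mulVec d) t ∧
      HasDerivAt xc (Bᵀ.mulVec (gradH (x t))) t)
    -- … iff (x, x_c − x̄_c) solves the disturbance-free constrained system with
    -- shifted constraint intervals
    ↔ (∀ t : ℝ, 0 ≤ t →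
      HasDerivAt x
        (B.mulVec (satVec (-(Bᵀ.mulVec (gradH (x t))) - (xc t - xbarc))
          (um + xbarc) (up + xbarc))) t ∧
      HasDerivAt (fun s => xc s - xbarc) (Bᵀ.mulVec (gradH (x t))) t) := by
  have key : ∀ t : ℝ,
      B.mulVec (satVec (-(Bᵀ.mulVec (gradH (x t))) - (xc t - xbarc))
        (um + xbarc) (up + xbarc))
      = B.mulVec (satVec (-(Bᵀ.mulVec (gradH (x t))) - xc t) um up) + E.mulVec d := by
    intro t
    have h1 : -(Bᵀ.mulVec (gradH (x t))) - (xc t - xbarc)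
        = (-(Bᵀ.mulVec (gradH (x t))) - xc t) + xbarc := by ring
    rw [h1, satVec_shift, Matrix.mulVec_add, hmatch]
  have hc : ∀ t v, HasDerivAt xc v t ↔ HasDerivAt (fun s => xc s - xbarc) v t := by
    intro t v
    constructor
    · intro h; exact h.sub_const xbarc
    · intro h
      have := h.add_const xbarc
      simpa using this
  constructor
  · intro h t ht
    obtain ⟨h1, h2⟩ := h t ht
    exact ⟨by rw [key]; exact h1, (hc t _).mp h2⟩
  · intro h t ht
    obtain ⟨h1, h2⟩ := h t ht
    exact ⟨by rw [key] at h1; exact h1, (hc t _).mpr h2⟩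
end
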